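/- In the group G₂ = ⟨x, y, z : xy = yx, zxz⁻¹ = x⁻¹, zyz⁻¹ = y⁻¹⟩, the number of subgroups of index n isomorphic to G₂ itself equals ω(n) - ω(n/2), where ω(m) = Σ_{abc=m} a²b and ω(n/2) = 0 if n is odd. -/

import Mathlib

def sg (c : ℤ) : ℤ := if Even c then 1 else -1

lemma sg_add (m n : ℤ) : sg (m+n) = sg m * sg n := by
  unfold sg
  by_cases hm : Even m <;> by_cases hn : Even n <;>
    simp [Int.even_add, hm, hn]

@[simp] lemma sg_zero : sg 0 = 1 := by simp [sg]
@[simp] lemma sg_one : sg 1 = -1 := by simp [sg]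
@[simp] lemma sg_mul_self (m : ℤ) : sg m * sg m = 1 := by unfold sg; split <;> ring
@[simp] lemma sg_neg (m : ℤ) : sg (-m) = sg m := by unfold sg; simp
lemma sg_eq_one {m : ℤ} (h : Even m) : sg m = 1 := by simp [sg, h]
lemma sg_eq_negone {m : ℤ} (h : ¬ Even m) : sg m = -1 := by simp [sg, h]

@[ext] structure Gm where
  a : ℤ
  b : ℤ
  c : ℤ

namespace Gm

def gmul (g h : Gm) : Gm := ⟨g.a + sg g.c * h.a, g.b + sg g.c * h.b, g.c + h.c⟩
def ginv (g : Gm) : Gm := ⟨-(sg g.c * g.a), -(sg g.c * g.b), -g.c⟩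

instance : Group Gm where
  mul := gmul
  one := ⟨0,0,0⟩
  inv := ginv
  mul_assoc g h k := by
    show gmul (gmul g h) k = gmul g (gmul h k)
    unfold gmul; ext <;> simp [sg_add] <;> ring
  one_mul g := by show gmul ⟨0,0,0⟩ g = g; unfold gmul; ext <;> simp
  mul_one g := by show gmul g ⟨0,0,0⟩ = g; unfold gmul; ext <;> simp
  inv_mul_cancel g := by
    show gmul (ginv g) g = ⟨0,0,0⟩
    unfold gmul ginv; ext <;> simp

@[simp] lemma mul_def (g h : Gm) :
    g * h = ⟨g.a + sg g.c * h.a, g.b + sg g.c * h.b, g.c + h.c⟩ := rfl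
@[simp] lemma one_def : (1 : Gm) = ⟨0,0,0⟩ := rfl
@[simp] lemma inv_def (g : Gm) :
    g⁻¹ = ⟨-(sg g.c * g.a), -(sg g.c * g.b), -g.c⟩ := rfl

/-- the third coordinate as a hom to `Multiplicative ℤ` -/
def cHom : Gm →* Multiplicative ℤ where
  toFun g := Multiplicative.ofAdd g.c
  map_one' := rfl
  map_mul' g h := rfl

@[simp] lemma c_zpow (g : Gm) (k : ℤ) : (g ^ k).c = k * g.c := by
  have := map_zpow cHom g k
  have h2 : Multiplicative.toAdd (cHom (g^k)) = Multiplicative.toAdd ((cHom g)^k) := by rw [this]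
  change (g^k).c = Multiplicative.toAdd ((Multiplicative.ofAdd g.c)^k) at h2
  rw [h2, toAdd_zpow, toAdd_ofAdd, smul_eq_mul]

@[simp] lemma c_pow (g : Gm) (k : ℕ) : (g ^ k).c = k * g.c := by
  have := c_zpow g (k : ℤ); rwa [zpow_natCast] at this

lemma pow_K (p q : ℤ) (k : ℤ) : (⟨p, q, 0⟩ : Gm) ^ k = ⟨k * p, k * q, 0⟩ := by
  induction k using Int.induction_on with
  | zero => simp
  | succ n ih => rw [zpow_add_one, ih]; ext <;> simp <;> ring
  | pred n ih => rw [zpow_sub_one, ih]; ext <;> simp <;> ring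

lemma pow_Z (k : ℤ) : (⟨0, 0, 1⟩ : Gm) ^ k = ⟨0, 0, k⟩ := by
  induction k using Int.induction_on with
  | zero => simp
  | succ n ih => rw [zpow_add_one, ih]; ext <;> simp
  | pred n ih => rw [zpow_sub_one, ih]; ext <;> simp <;> ring

lemma conj_K (z : Gm) (p q : ℤ) :
    z⁻¹ * ⟨p, q, 0⟩ * z = ⟨sg z.c * p, sg z.c * q, 0⟩ := by
  ext <;> simp

end Gm

/-! ### The presented group and the isomorphism -/

/-- The relations of `π₁(𝒢₂)`: `x y x⁻¹ y⁻¹ = 1`, `z x z⁻¹ x = 1`, `z y z⁻¹ y = 1`. -/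
def g2Rels : Set (FreeGroup (Fin 3)) :=
  { FreeGroup.of 0 * FreeGroup.of 1 * (FreeGroup.of 0)⁻¹ * (FreeGroup.of 1)⁻¹,
    FreeGroup.of 2 * FreeGroup.of 0 * (FreeGroup.of 2)⁻¹ * FreeGroup.of 0,
    FreeGroup.of 2 * FreeGroup.of 1 * (FreeGroup.of 2)⁻¹ * FreeGroup.of 1 }

/-- The fundamental group of the platycosm `𝒢₂`. -/
abbrev G2 : Type := PresentedGroup g2Rels

namespace G2iso

def x : G2 := PresentedGroup.of 0
def y : G2 := PresentedGroup.of 1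
def z : G2 := PresentedGroup.of 2

lemma rel_eq_one {r : FreeGroup (Fin 3)} (h : r ∈ g2Rels) :
    PresentedGroup.mk g2Rels r = 1 := by
  have : r ∈ Subgroup.normalClosure g2Rels := Subgroup.subset_normalClosure h
  exact (QuotientGroup.eq_one_iff r).mpr this

lemma rel1 : x * y * x⁻¹ * y⁻¹ = 1 := by
  have := rel_eq_one (r := FreeGroup.of 0 * FreeGroup.of 1 * (FreeGroup.of 0)⁻¹ *
    (FreeGroup.of 1)⁻¹) (by simp [g2Rels])
  simpa [x, y, PresentedGroup.of, map_mul, map_inv] using this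

lemma rel2 : z * x * z⁻¹ * x = 1 := by
  have := rel_eq_one (r := FreeGroup.of 2 * FreeGroup.of 0 * (FreeGroup.of 2)⁻¹ *
    FreeGroup.of 0) (by simp [g2Rels])
  simpa [x, z, PresentedGroup.of, map_mul, map_inv] using this

lemma rel3 : z * y * z⁻¹ * y = 1 := by
  have := rel_eq_one (r := FreeGroup.of 2 * FreeGroup.of 1 * (FreeGroup.of 2)⁻¹ *
    FreeGroup.of 1) (by simp [g2Rels])
  simpa [y, z, PresentedGroup.of, map_mul, map_inv] using this

lemma comm_xy : Commute x y := by
  have h := mul_eq_one_iff_eq_inv.mp rel1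
  rw [inv_inv] at h
  exact mul_inv_eq_iff_eq_mul.mp h

lemma conj_x : z * x * z⁻¹ = x⁻¹ := mul_eq_one_iff_eq_inv.mp rel2

lemma conj_y : z * y * z⁻¹ = y⁻¹ := mul_eq_one_iff_eq_inv.mp rel3

lemma conj_x_zpow (m : ℤ) : z * x ^ m * z⁻¹ = x ^ (-m) := by
  have : (MulAut.conj z) x = x⁻¹ := by simp [MulAut.conj_apply, conj_x]
  have h2 := map_zpow (MulAut.conj z) x m
  rw [this] at h2
  simpa [MulAut.conj_apply, inv_zpow, zpow_neg, mul_assoc] using h2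

lemma conj_y_zpow (m : ℤ) : z * y ^ m * z⁻¹ = y ^ (-m) := by
  have : (MulAut.conj z) y = y⁻¹ := by simp [MulAut.conj_apply, conj_y]
  have h2 := map_zpow (MulAut.conj z) y m
  rw [this] at h2
  simpa [MulAut.conj_apply, inv_zpow, zpow_neg, mul_assoc] using h2

lemma conj_x_zpow' (m : ℤ) : z⁻¹ * x ^ m * z = x ^ (-m) := by
  have h := conj_x_zpow (-m)
  rw [neg_neg] at h
  rw [← h]
  group

lemma conj_y_zpow' (m : ℤ) : z⁻¹ * y ^ m * z = y ^ (-m) := by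
  have h := conj_y_zpow (-m)
  rw [neg_neg] at h
  rw [← h]
  group

lemma sg_add_one (m : ℤ) : sg (m + 1) = -sg m := by
  rw [sg_add]; simp [sg]

lemma sg_sub_one (m : ℤ) : sg (m - 1) = -sg m := by
  rw [show m - 1 = m + (-1) by ring, sg_add]; simp [sg]

lemma zc_x (c m : ℤ) : z ^ c * x ^ m * z ^ (-c) = x ^ (sg c * m) := by
  induction c using Int.induction_on with
  | zero => simp
  | succ n ih =>
      have h : z ^ ((n : ℤ) + 1) * x ^ m * z ^ (-((n : ℤ) + 1)) =
          z * (z ^ (n : ℤ) * x ^ m * z ^ (-(n : ℤ))) * z⁻¹ := by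
        rw [zpow_add_one]; group
      rw [h, ih, conj_x_zpow, sg_add_one]
      congr 1; ring
  | pred n ih =>
      have h : z ^ (-(n : ℤ) - 1) * x ^ m * z ^ (-(-(n : ℤ) - 1)) =
          z⁻¹ * (z ^ (-(n : ℤ)) * x ^ m * z ^ (-(-(n : ℤ)))) * z := by
        rw [zpow_sub_one]; group
      rw [h, ih, conj_x_zpow', sg_sub_one]
      congr 1; ring

lemma zc_y (c m : ℤ) : z ^ c * y ^ m * z ^ (-c) = y ^ (sg c * m) := by
  induction c using Int.induction_on with
  | zero => simp
  | succ n ih =>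
      have h : z ^ ((n : ℤ) + 1) * y ^ m * z ^ (-((n : ℤ) + 1)) =
          z * (z ^ (n : ℤ) * y ^ m * z ^ (-(n : ℤ))) * z⁻¹ := by
        rw [zpow_add_one]; group
      rw [h, ih, conj_y_zpow, sg_add_one]
      congr 1; ring
  | pred n ih =>
      have h : z ^ (-(n : ℤ) - 1) * y ^ m * z ^ (-(-(n : ℤ) - 1)) =
          z⁻¹ * (z ^ (-(n : ℤ)) * y ^ m * z ^ (-(-(n : ℤ)))) * z := by
        rw [zpow_sub_one]; group
      rw [h, ih, conj_y_zpow', sg_sub_one]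
      congr 1; ring


lemma swap_zx (c m : ℤ) : z ^ c * x ^ m = x ^ (sg c * m) * z ^ c := by
  have h := zc_x c m
  rw [← h]; group

lemma swap_zy (c m : ℤ) : z ^ c * y ^ m = y ^ (sg c * m) * z ^ c := by
  have h := zc_y c m
  rw [← h]; group

lemma swap_yx (b m : ℤ) : y ^ b * x ^ m = x ^ m * y ^ b :=
  (comm_xy.zpow_zpow m b).symm.eq

lemma nf_mul (a b c d e f : ℤ) :
    (x^a * y^b * z^c) * (x^d * y^e * z^f) =
      x^(a + sg c * d) * y^(b + sg c * e) * z^(c + f) := by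
  calc x^a * y^b * z^c * (x^d * y^e * z^f)
      = x^a * y^b * ((z^c * x^d) * (y^e * z^f)) := by group
    _ = x^a * y^b * ((x^(sg c * d) * z^c) * (y^e * z^f)) := by rw [swap_zx]
    _ = x^a * y^b * (x^(sg c * d) * ((z^c * y^e) * z^f)) := by group
    _ = x^a * y^b * (x^(sg c * d) * ((y^(sg c * e) * z^c) * z^f)) := by rw [swap_zy]
    _ = x^a * ((y^b * x^(sg c * d)) * (y^(sg c * e) * (z^c * z^f))) := by group
    _ = x^a * ((x^(sg c * d) * y^b) * (y^(sg c * e) * (z^c * z^f))) := by rw [swap_yx]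
    _ = (x^a * x^(sg c * d)) * ((y^b * y^(sg c * e)) * (z^c * z^f)) := by group
    _ = x^(a + sg c * d) * (y^(b + sg c * e) * z^(c + f)) := by
        rw [← zpow_add, ← zpow_add, ← zpow_add]
    _ = x^(a + sg c * d) * y^(b + sg c * e) * z^(c + f) := by group

/-- the homomorphism `Gm →* G2` -/
def psi : Gm →* G2 where
  toFun g := x ^ g.a * y ^ g.b * z ^ g.c
  map_one' := by simp
  map_mul' g h := by
    show x ^ (g*h).a * y ^ (g*h).b * z ^ (g*h).c =
      (x ^ g.a * y ^ g.b * z ^ g.c) * (x ^ h.a * y ^ h.b * z ^ h.c)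
    rw [Gm.mul_def]
    exact (nf_mul g.a g.b g.c h.a h.b h.c).symm

def fgen : Fin 3 → Gm := ![⟨1,0,0⟩, ⟨0,1,0⟩, ⟨0,0,1⟩]

lemma hrels : ∀ r ∈ g2Rels, FreeGroup.lift fgen r = 1 := by
  intro r hr
  simp only [g2Rels, Set.mem_insert_iff, Set.mem_singleton_iff] at hr
  rcases hr with h | h | h <;> subst h <;>
    simp [map_mul, map_inv, fgen] <;> ext <;> simp [sg]

/-- the homomorphism `G2 →* Gm` -/
def phi : G2 →* Gm := PresentedGroup.toGroup hrels

@[simp] lemma phi_x : phi x = ⟨1,0,0⟩ := PresentedGroup.toGroup.of hrels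
@[simp] lemma phi_y : phi y = ⟨0,1,0⟩ := PresentedGroup.toGroup.of hrels
@[simp] lemma phi_z : phi z = ⟨0,0,1⟩ := PresentedGroup.toGroup.of hrels

lemma phi_psi (g : Gm) : phi (psi g) = g := by
  show phi (x ^ g.a * y ^ g.b * z ^ g.c) = g
  rw [map_mul, map_mul, map_zpow, map_zpow, map_zpow, phi_x, phi_y, phi_z,
    Gm.pow_K, Gm.pow_K, Gm.pow_Z]
  ext <;> simp

lemma psi_phi (g : G2) : psi (phi g) = g := by
  have h : psi.comp phi = MonoidHom.id G2 := by
    apply PresentedGroup.ext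
    intro i
    fin_cases i <;>
      simp [phi, psi, PresentedGroup.toGroup.of, fgen, x, y, z]
  calc psi (phi g) = (psi.comp phi) g := rfl
    _ = g := by rw [h]; rfl

/-- the isomorphism -/
def equivG2Gm : G2 ≃* Gm where
  toFun := phi
  invFun := psi
  left_inv := psi_phi
  right_inv := phi_psi
  map_mul' := phi.map_mul

end G2iso


/-! ### The subgroups `Hsub` -/

namespace Gm

lemma conj_zpow_K (W : Gm) (l p q : ℤ) :
    (W ^ l)⁻¹ * ⟨p, q, 0⟩ * W ^ l = ⟨sg (l * W.c) * p, sg (l * W.c) * q, 0⟩ := by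
  rw [conj_K, c_zpow]

/-- The subgroup of `Gm` generated by `⟨a,0,0⟩, ⟨s,b,0⟩, ⟨t,u,γ⟩`, described explicitly. -/
def Hsub (a b s t u γ : ℤ) : Subgroup Gm where
  carrier := {g | ∃ k x y : ℤ, g = (⟨t, u, γ⟩ : Gm) ^ k * ⟨a * x + s * y, b * y, 0⟩}
  one_mem' := ⟨0, 0, 0, by ext <;> simp⟩
  mul_mem' := by
    rintro g h ⟨k, x1, y1, rfl⟩ ⟨l, x2, y2, rfl⟩
    refine ⟨k + l, sg (l * γ) * x1 + x2, sg (l * γ) * y1 + y2, ?_⟩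
    set W : Gm := ⟨t, u, γ⟩ with hW
    have h1 : W ^ k * ⟨a * x1 + s * y1, b * y1, 0⟩ * (W ^ l * ⟨a * x2 + s * y2, b * y2, 0⟩) =
        W ^ (k + l) * (((W ^ l)⁻¹ * ⟨a * x1 + s * y1, b * y1, 0⟩ * W ^ l) *
          ⟨a * x2 + s * y2, b * y2, 0⟩) := by
      rw [zpow_add]; group
    rw [h1, conj_zpow_K]
    congr 1
    have hc : W.c = γ := rfl
    rw [hc]
    ext <;> simp <;> ring
  inv_mem' := by
    rintro g ⟨k, x, y, rfl⟩
    refine ⟨-k, -(sg (k * γ) * x), -(sg (k * γ) * y), ?_⟩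
    set W : Gm := ⟨t, u, γ⟩ with hW
    have hP : (⟨a * x + s * y, b * y, 0⟩ : Gm)⁻¹ = ⟨-(a * x + s * y), -(b * y), 0⟩ := by
      ext <;> simp
    have h1 : (W ^ k * ⟨a * x + s * y, b * y, 0⟩)⁻¹ =
        W ^ (-k) * ((W ^ (-k))⁻¹ * (⟨a * x + s * y, b * y, 0⟩)⁻¹ * W ^ (-k)) := by
      group
    rw [h1, hP, conj_zpow_K]
    congr 1
    have hc : W.c = γ := rfl
    rw [hc]
    have hsg : sg (-k * γ) = sg (k * γ) := by rw [show -k * γ = -(k * γ) by ring, sg_neg]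
    rw [hsg]
    ext <;> simp <;> ring

lemma mem_Hsub {a b s t u γ : ℤ} {g : Gm} :
    g ∈ Hsub a b s t u γ ↔ ∃ k x y : ℤ, g = (⟨t, u, γ⟩ : Gm) ^ k * ⟨a * x + s * y, b * y, 0⟩ :=
  Iff.rfl

lemma Hsub_c_dvd {a b s t u γ : ℤ} {g : Gm} (hg : g ∈ Hsub a b s t u γ) : γ ∣ g.c := by
  obtain ⟨k, x, y, rfl⟩ := hg
  refine ⟨k, ?_⟩
  simp [c_zpow, mul_comm]

lemma Hsub_mem_K {a b s t u γ : ℤ} (hγ : γ ≠ 0) {p q : ℤ} :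
    (⟨p, q, 0⟩ : Gm) ∈ Hsub a b s t u γ ↔ ∃ x y : ℤ, p = a * x + s * y ∧ q = b * y := by
  constructor
  · rintro ⟨k, x, y, hk⟩
    have hc : (0:ℤ) = k * γ := by
      have := congrArg Gm.c hk
      simpa [c_zpow] using this
    have hk0 : k = 0 := by
      rcases mul_eq_zero.mp hc.symm with h | h
      · exact h
      · exact absurd h hγ
    subst hk0
    rw [zpow_zero, one_mul] at hk
    exact ⟨x, y, congrArg Gm.a hk, congrArg Gm.b hk⟩
  · rintro ⟨x, y, rfl, rfl⟩
    exact ⟨0, x, y, by ext <;> simp⟩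

lemma X_mem_Hsub (a b s t u γ : ℤ) : (⟨a, 0, 0⟩ : Gm) ∈ Hsub a b s t u γ :=
  ⟨0, 1, 0, by ext <;> simp⟩

lemma Y_mem_Hsub (a b s t u γ : ℤ) : (⟨s, b, 0⟩ : Gm) ∈ Hsub a b s t u γ :=
  ⟨0, 0, 1, by ext <;> simp⟩

lemma W_mem_Hsub (a b s t u γ : ℤ) : (⟨t, u, γ⟩ : Gm) ∈ Hsub a b s t u γ :=
  ⟨1, 0, 0, by ext <;> simp⟩

end Gm

namespace Gm

lemma pow_C (e : ℤ) (k : ℤ) : (⟨0, 0, e⟩ : Gm) ^ k = ⟨0, 0, k * e⟩ := by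
  induction k using Int.induction_on with
  | zero => simp
  | succ n ih => rw [zpow_add_one, ih]; ext <;> simp <;> ring
  | pred n ih => rw [zpow_sub_one, ih]; ext <;> simp <;> ring

lemma sg_cases (m : ℤ) : sg m = 1 ∨ sg m = -1 := by
  unfold sg; split
  · exact Or.inl rfl
  · exact Or.inr rfl

lemma Wpow_even {t u γ : ℤ} (hγ : ¬ Even γ) {k : ℤ} (hk : Even k) :
    (⟨t, u, γ⟩ : Gm) ^ k = ⟨0, 0, k * γ⟩ := by
  obtain ⟨m, rfl⟩ := hk
  have h2 : (⟨t, u, γ⟩ : Gm) ^ (2:ℤ) = ⟨0, 0, 2 * γ⟩ := by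
    rw [show (2:ℤ) = 1 + 1 by norm_num, zpow_add, zpow_one]
    ext <;> simp [sg_eq_negone hγ] <;> ring
  rw [show m + m = 2 * m by ring, zpow_mul, h2, pow_C]
  ext <;> simp <;> ring

lemma Wpow_odd {t u γ : ℤ} (hγ : ¬ Even γ) {k : ℤ} (hk : ¬ Even k) :
    (⟨t, u, γ⟩ : Gm) ^ k = ⟨t, u, k * γ⟩ := by
  obtain ⟨m, rfl⟩ := Int.not_even_iff_odd.mp hk
  have h1 : Even (2 * m) := ⟨m, by ring⟩
  rw [zpow_add_one, Wpow_even hγ h1]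
  have h3 : Even (2 * m * γ) := h1.mul_right γ
  ext <;> simp [sg_eq_one h3] <;> ring

lemma dvd_small_eq_zero {γ d : ℤ} (h : γ ∣ d) (h1 : -γ < d) (h2 : d < γ) : d = 0 := by
  obtain ⟨c, rfl⟩ := h
  rcases lt_trichotomy c 0 with h3 | h3 | h3
  · nlinarith
  · simp [h3]
  · nlinarith

lemma box_decomp (m M : ℤ) (hM : 0 < M) :
    ∃ d j : ℤ, m = M * d + j ∧ 0 ≤ j ∧ j < M :=
  ⟨m / M, m % M, by rw [Int.mul_ediv_add_emod], Int.emod_nonneg m (by omega),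
    Int.emod_lt_of_pos m hM⟩

section Index

variable {a b γ : ℕ} {s t u : ℤ}

/-- coset representatives map -/
def rho (a b γ : ℕ) (s t u : ℤ) (v : Fin a × Fin b × Fin γ) :
    Gm ⧸ Hsub (a:ℤ) (b:ℤ) s t u (γ:ℤ) :=
  QuotientGroup.mk ⟨(v.1 : ℤ), (v.2.1 : ℤ), (v.2.2 : ℤ)⟩

lemma rho_injective (ha : 0 < a) (hb : 0 < b) (hγ : 0 < γ) :
    Function.Injective (rho a b γ s t u) := by
  rintro ⟨i1, j1, l1⟩ ⟨i2, j2, l2⟩ h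
  rw [rho, rho, QuotientGroup.eq] at h
  have hcomp : ((⟨(i1:ℤ), (j1:ℤ), (l1:ℤ)⟩ : Gm)⁻¹ * ⟨(i2:ℤ), (j2:ℤ), (l2:ℤ)⟩ : Gm) =
      ⟨sg l1 * ((i2:ℤ) - i1), sg l1 * ((j2:ℤ) - j1), (l2:ℤ) - l1⟩ := by
    ext <;> simp <;> ring
  rw [hcomp] at h
  have hc := Hsub_c_dvd h
  simp only at hc
  have hi1 := i1.2; have hi2 := i2.2; have hj1 := j1.2; have hj2 := j2.2
  have hl1 := l1.2; have hl2 := l2.2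
  have hl : (l2:ℤ) - l1 = 0 := by
    refine dvd_small_eq_zero hc ?_ ?_ <;> push_cast <;> omega
  have hll : l1 = l2 := Fin.ext (by omega)
  rw [hl] at h
  obtain ⟨x, y, hx, hy⟩ := (Hsub_mem_K (by positivity)).mp h
  rcases sg_cases (l1:ℤ) with hsg | hsg <;> rw [hsg] at hx hy
  · rw [one_mul] at hx hy
    have hj : (j2:ℤ) - j1 = 0 := by
      refine dvd_small_eq_zero ⟨y, hy⟩ ?_ ?_ <;> push_cast <;> omega
    have hy0 : y = 0 := by
      rw [hj] at hy
      rcases mul_eq_zero.mp hy.symm with h' | h'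
      · exfalso; omega
      · exact h'
    rw [hy0, mul_zero, add_zero] at hx
    have hi : (i2:ℤ) - i1 = 0 := by
      refine dvd_small_eq_zero ⟨x, hx⟩ ?_ ?_ <;> push_cast <;> omega
    have : i1 = i2 := Fin.ext (by omega)
    have : j1 = j2 := Fin.ext (by omega)
    simp_all
  · have hx' : (i2:ℤ) - i1 = (a:ℤ) * (-x) + s * (-y) := by linarith
    have hy' : (j2:ℤ) - j1 = (b:ℤ) * (-y) := by linarith
    have hj : (j2:ℤ) - j1 = 0 := by
      refine dvd_small_eq_zero ⟨-y, hy'⟩ ?_ ?_ <;> push_cast <;> omega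
    have hy0 : y = 0 := by
      rw [hj] at hy'
      have := mul_eq_zero.mp hy'.symm
      rcases this with h' | h'
      · exfalso; omega
      · omega
    rw [hy0] at hx'
    have hii : (i2:ℤ) - i1 = (a:ℤ) * (-x) := by linarith
    have hi : (i2:ℤ) - i1 = 0 := by
      refine dvd_small_eq_zero ⟨-x, hii⟩ ?_ ?_ <;> push_cast <;> omega
    have : i1 = i2 := Fin.ext (by omega)
    have : j1 = j2 := Fin.ext (by omega)
    simp_all

lemma rho_surjective (ha : 0 < a) (hb : 0 < b) (hγpos : 0 < γ) (hγ : ¬ Even (γ:ℤ)) :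
    Function.Surjective (rho a b γ s t u) := by
  intro gbar
  obtain ⟨g, rfl⟩ := QuotientGroup.mk_surjective gbar
  obtain ⟨p, q, r⟩ := g
  obtain ⟨k, l, hr, hl0, hl1⟩ := box_decomp r γ (by exact_mod_cast hγpos)
  -- closed form for W^k
  obtain ⟨T, U, hWk⟩ : ∃ T U : ℤ, (⟨t, u, (γ:ℤ)⟩ : Gm) ^ k = ⟨T, U, k * γ⟩ := by
    rcases Int.even_or_odd k with hk | hk
    · exact ⟨0, 0, Wpow_even hγ hk⟩
    · exact ⟨t, u, Wpow_odd hγ (Int.not_even_iff_odd.mpr hk)⟩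
  obtain ⟨d, j, hq, hj0, hj1⟩ := box_decomp (q - sg l * U) b (by exact_mod_cast hb)
  obtain ⟨e, i, hp, hi0, hi1⟩ := box_decomp (p - sg l * T - s * d) a (by exact_mod_cast ha)
  refine ⟨⟨⟨i.toNat, by omega⟩, ⟨j.toNat, by omega⟩, ⟨l.toNat, by omega⟩⟩, ?_⟩
  have ci : ((i.toNat : ℕ) : ℤ) = i := by omega
  have cj : ((j.toNat : ℕ) : ℤ) = j := by omega
  have cl : ((l.toNat : ℕ) : ℤ) = l := by omega
  show QuotientGroup.mk _ = QuotientGroup.mk _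
  have hrho : (⟨((i.toNat : ℕ) : ℤ), ((j.toNat : ℕ) : ℤ), ((l.toNat : ℕ) : ℤ)⟩ : Gm) =
      ⟨i, j, l⟩ := by rw [ci, cj, cl]
  rw [hrho, QuotientGroup.eq]
  refine ⟨k, sg l * sg (k*γ) * e, sg l * sg (k*γ) * d, ?_⟩
  rw [hWk]
  rcases sg_cases l with h1 | h1 <;> rcases sg_cases (k*γ) with h2 | h2 <;>
    simp only [h1, h2] at hq hp <;> ext <;> simp [h1, h2] <;> ring_nf <;>
    ring_nf at hq hp hr <;> linarith [hq, hp, hr]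

lemma Hsub_index (ha : 0 < a) (hb : 0 < b) (hγpos : 0 < γ) (hγ : ¬ Even (γ:ℤ)) :
    (Hsub (a:ℤ) (b:ℤ) s t u (γ:ℤ)).index = a * b * γ := by
  have hbij : Function.Bijective (rho a b γ s t u) :=
    ⟨rho_injective ha hb hγpos, rho_surjective ha hb hγpos hγ⟩
  have hcard : Nat.card (Gm ⧸ Hsub (a:ℤ) (b:ℤ) s t u (γ:ℤ)) =
      Nat.card (Fin a × Fin b × Fin γ) :=
    (Nat.card_congr (Equiv.ofBijective _ hbij)).symm
  rw [Subgroup.index, hcard]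
  simp [Nat.card_eq_fintype_card, mul_assoc]

end Index

end Gm

namespace Gm

lemma sg_sq (m : ℤ) : sg m ^ 2 = 1 := by rw [sq]; exact sg_mul_self m

lemma sg_mul_odd {γ : ℤ} (hγ : ¬ Even γ) (m : ℤ) : sg (m * γ) = sg m := by
  by_cases hm : Even m <;> simp [sg, Int.even_mul, hγ, hm]

lemma swap_Wk (W : Gm) (m p q : ℤ) :
    W ^ m * ⟨p, q, 0⟩ = (⟨sg (m * W.c) * p, sg (m * W.c) * q, 0⟩ : Gm) * W ^ m := by
  have h := conj_zpow_K W (-m) p q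
  rw [zpow_neg, inv_inv] at h
  have hsg : sg (-m * W.c) = sg (m * W.c) := by
    rw [show -m * W.c = -(m * W.c) by ring, sg_neg]
  rw [hsg] at h
  rw [← h]
  group

section Iso

variable {a b γ : ℕ} {s t u : ℤ}

/-- The homomorphism `Gm →* Gm` with image `Hsub`. -/
def PhiFun (a b : ℕ) (s t u : ℤ) (γ : ℕ) (g : Gm) : Gm :=
  (⟨(a:ℤ) * g.a + s * g.b, (b:ℤ) * g.b, 0⟩ : Gm) * (⟨t, u, (γ:ℤ)⟩ : Gm) ^ g.c

lemma PhiFun_mul (hγ : ¬ Even (γ:ℤ)) (g h : Gm) :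
    PhiFun a b s t u γ (g * h) = PhiFun a b s t u γ g * PhiFun a b s t u γ h := by
  obtain ⟨p1, q1, k1⟩ := g
  obtain ⟨p2, q2, k2⟩ := h
  set W : Gm := ⟨t, u, (γ:ℤ)⟩ with hW
  have hWc : W.c = (γ:ℤ) := rfl
  have hswap := swap_Wk W k1 ((a:ℤ) * p2 + s * q2) ((b:ℤ) * q2)
  rw [hWc, sg_mul_odd hγ] at hswap
  show (⟨(a:ℤ) * (p1 + sg k1 * p2) + s * (q1 + sg k1 * q2),
      (b:ℤ) * (q1 + sg k1 * q2), 0⟩ : Gm) * W ^ (k1 + k2) =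
    ((⟨(a:ℤ) * p1 + s * q1, (b:ℤ) * q1, 0⟩ : Gm) * W ^ k1) *
      ((⟨(a:ℤ) * p2 + s * q2, (b:ℤ) * q2, 0⟩ : Gm) * W ^ k2)
  calc (⟨(a:ℤ) * (p1 + sg k1 * p2) + s * (q1 + sg k1 * q2),
      (b:ℤ) * (q1 + sg k1 * q2), 0⟩ : Gm) * W ^ (k1 + k2)
      = ((⟨(a:ℤ) * p1 + s * q1, (b:ℤ) * q1, 0⟩ : Gm) *
          ⟨sg k1 * ((a:ℤ) * p2 + s * q2), sg k1 * ((b:ℤ) * q2), 0⟩) * W ^ (k1 + k2) := by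
        congr 1
        ext <;> simp <;> ring
    _ = (⟨(a:ℤ) * p1 + s * q1, (b:ℤ) * q1, 0⟩ : Gm) *
          ((⟨sg k1 * ((a:ℤ) * p2 + s * q2), sg k1 * ((b:ℤ) * q2), 0⟩ : Gm) * W ^ k1) *
          (W ^ k2) := by
        rw [zpow_add]; group
    _ = (⟨(a:ℤ) * p1 + s * q1, (b:ℤ) * q1, 0⟩ : Gm) *
          (W ^ k1 * ⟨(a:ℤ) * p2 + s * q2, (b:ℤ) * q2, 0⟩) * (W ^ k2) := by rw [hswap]
    _ = ((⟨(a:ℤ) * p1 + s * q1, (b:ℤ) * q1, 0⟩ : Gm) * W ^ k1) *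
          ((⟨(a:ℤ) * p2 + s * q2, (b:ℤ) * q2, 0⟩ : Gm) * W ^ k2) := by group

lemma PhiFun_mem (g : Gm) :
    PhiFun a b s t u γ g ∈ Hsub (a:ℤ) (b:ℤ) s t u (γ:ℤ) := by
  obtain ⟨p, q, k⟩ := g
  refine ⟨k, sg (k * γ) * p, sg (k * γ) * q, ?_⟩
  unfold PhiFun
  simp only
  rw [swap_Wk]
  have hWc : (⟨t, u, (γ:ℤ)⟩ : Gm).c = (γ:ℤ) := rfl
  rw [hWc]
  congr 1
  ext <;> simp <;> ring_nf <;> simp [sg_sq]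

/-- `PhiFun` as a monoid hom into the subgroup. -/
def PhiHom (a b : ℕ) (s t u : ℤ) (γ : ℕ) (hγ : ¬ Even (γ:ℤ)) :
    Gm →* Hsub (a:ℤ) (b:ℤ) s t u (γ:ℤ) where
  toFun g := ⟨PhiFun a b s t u γ g, PhiFun_mem g⟩
  map_one' := Subtype.ext (by
    show PhiFun a b s t u γ 1 = 1
    unfold PhiFun
    simp)
  map_mul' g h := Subtype.ext (PhiFun_mul hγ g h)

lemma PhiHom_bijective (ha : 0 < a) (hb : 0 < b) (hγpos : 0 < γ) (hγ : ¬ Even (γ:ℤ)) :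
    Function.Bijective (PhiHom a b s t u γ hγ) := by
  constructor
  · intro g h hgh
    have h1 : PhiFun a b s t u γ g = PhiFun a b s t u γ h := congrArg Subtype.val hgh
    obtain ⟨p1, q1, k1⟩ := g
    obtain ⟨p2, q2, k2⟩ := h
    unfold PhiFun at h1
    simp only at h1
    have hc := congrArg Gm.c h1
    simp [c_zpow] at hc
    have hk : k1 = k2 := by
      rcases hc with h | h
      · exact h
      · exact absurd h hγpos.ne'
    subst hk
    have h2 : (⟨(a:ℤ) * p1 + s * q1, (b:ℤ) * q1, 0⟩ : Gm) =
        ⟨(a:ℤ) * p2 + s * q2, (b:ℤ) * q2, 0⟩ := by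
      exact mul_right_cancel h1
    have hbq := congrArg Gm.b h2
    simp only at hbq
    have hq : q1 = q2 := by
      have hb' : (0:ℤ) < b := by exact_mod_cast hb
      have := mul_left_cancel₀ hb'.ne' hbq
      exact this
    subst hq
    have hap := congrArg Gm.a h2
    simp only at hap
    have hp : p1 = p2 := by
      have ha' : (0:ℤ) < a := by exact_mod_cast ha
      have h3 : (a:ℤ) * p1 = (a:ℤ) * p2 := by linarith
      exact mul_left_cancel₀ ha'.ne' h3
    subst hp
    rfl
  · rintro ⟨h, k, x, y, rfl⟩
    refine ⟨⟨sg (k * γ) * x, sg (k * γ) * y, k⟩, ?_⟩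
    apply Subtype.ext
    show PhiFun a b s t u γ _ = (⟨t, u, (γ:ℤ)⟩ : Gm) ^ k * ⟨(a:ℤ) * x + s * y, (b:ℤ) * y, 0⟩
    unfold PhiFun
    simp only
    rw [swap_Wk]
    have hWc : (⟨t, u, (γ:ℤ)⟩ : Gm).c = (γ:ℤ) := rfl
    rw [hWc]
    congr 1
    ext <;> simp <;> ring_nf <;> simp [sg_sq]

lemma Hsub_iso (ha : 0 < a) (hb : 0 < b) (hγpos : 0 < γ) (hγ : ¬ Even (γ:ℤ)) :
    Nonempty ((Hsub (a:ℤ) (b:ℤ) s t u (γ:ℤ)) ≃* Gm) :=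
  ⟨(MulEquiv.ofBijective _ (PhiHom_bijective ha hb hγpos hγ)).symm⟩

end Iso

end Gm

namespace Gm

@[simp] lemma c_mul (g h : Gm) : (g * h).c = g.c + h.c := rfl
@[simp] lemma a_mul (g h : Gm) : (g * h).a = g.a + sg g.c * h.a := rfl
@[simp] lemma b_mul (g h : Gm) : (g * h).b = g.b + sg g.c * h.b := rfl

lemma nat_min {P : ℕ → Prop} (h : ∃ n : ℕ, 0 < n ∧ P n) :
    ∃ n : ℕ, 0 < n ∧ P n ∧ ∀ m : ℕ, 0 < m → m < n → ¬ P m := by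
  classical
  have h' : ∃ n : ℕ, 0 < n ∧ P n := h
  refine ⟨Nat.find h', (Nat.find_spec h').1, (Nat.find_spec h').2, ?_⟩
  intro m hm hlt hPm
  exact Nat.find_min h' hlt ⟨hm, hPm⟩

lemma exists_zpow_mem (H : Subgroup Gm) (hidx : H.index ≠ 0) (g : Gm) :
    ∃ m : ℤ, 0 < m ∧ g ^ m ∈ H := by
  have hfin : Finite (Gm ⧸ H) := Nat.finite_of_card_ne_zero hidx
  have hni : ¬ Function.Injective (fun m : ℤ => (QuotientGroup.mk (g ^ m) : Gm ⧸ H)) := by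
    intro hinj
    have := Finite.of_injective _ hinj
    exact not_finite ℤ
  obtain ⟨m1, m2, hm, hne⟩ := Function.not_injective_iff.mp hni
  have hmem : g ^ (m2 - m1) ∈ H := by
    have h1 : (g ^ m1)⁻¹ * g ^ m2 ∈ H := QuotientGroup.eq.mp hm
    have h2 : (g ^ m1)⁻¹ * g ^ m2 = g ^ (m2 - m1) := by
      rw [← zpow_neg, ← zpow_add]; ring_nf
    rwa [h2] at h1
  rcases lt_trichotomy m1 m2 with h | h | h
  · exact ⟨m2 - m1, by omega, hmem⟩
  · exact absurd h hne
  · refine ⟨m1 - m2, by omega, ?_⟩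
    have : g ^ (m1 - m2) = (g ^ (m2 - m1))⁻¹ := by
      rw [← zpow_neg]; ring_nf
    rw [this]
    exact inv_mem hmem

lemma classify (H : Subgroup Gm) (hidx : H.index ≠ 0) :
    ∃ (a b γ : ℕ) (s t u : ℤ), 0 < a ∧ 0 < b ∧ 0 < γ ∧
      0 ≤ s ∧ s < a ∧ 0 ≤ t ∧ t < a ∧ 0 ≤ u ∧ u < b ∧
      H = Hsub (a:ℤ) (b:ℤ) s t u (γ:ℤ) := by
  classical
  -- γ : minimal positive c-value
  have hγex : ∃ n : ℕ, 0 < n ∧ ∃ g ∈ H, g.c = (n:ℤ) := by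
    obtain ⟨m, hm, hmem⟩ := exists_zpow_mem H hidx ⟨0,0,1⟩
    rw [pow_Z] at hmem
    exact ⟨m.toNat, by omega, ⟨0,0,m⟩, hmem, by simp; omega⟩
  obtain ⟨γ, hγpos, ⟨w0, hw0H, hw0c⟩, hγmin⟩ := nat_min hγex
  obtain ⟨wa, wb, wc⟩ := w0
  change wc = (γ:ℤ) at hw0c
  subst hw0c
  have hγz : (0:ℤ) < (γ:ℤ) := by exact_mod_cast hγpos
  have hdvd : ∀ g ∈ H, (γ:ℤ) ∣ g.c := by
    intro g hg
    by_contra hnd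
    set r := g.c % (γ:ℤ) with hr
    have hr0 : 0 ≤ r := Int.emod_nonneg _ hγz.ne'
    have hr1 : r < γ := Int.emod_lt_of_pos _ hγz
    have hrne : r ≠ 0 := fun h => hnd (Int.dvd_of_emod_eq_zero h)
    have hmem : g * (⟨wa, wb, (γ:ℤ)⟩ : Gm) ^ (-(g.c / (γ:ℤ))) ∈ H :=
      H.mul_mem hg (H.zpow_mem hw0H _)
    have hc : (g * (⟨wa, wb, (γ:ℤ)⟩ : Gm) ^ (-(g.c / (γ:ℤ)))).c = r := by
      have hd := Int.emod_def g.c (γ:ℤ)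
      simp only [c_mul, c_zpow, hr]
      rw [hd]; ring
    exact hγmin r.toNat (by omega) (by omega) ⟨_, hmem, by rw [hc]; omega⟩
  -- b : minimal positive second coordinate among c = 0 elements of H
  have hbex : ∃ n : ℕ, 0 < n ∧ ∃ g ∈ H, g.c = 0 ∧ g.b = (n:ℤ) := by
    obtain ⟨m, hm, hmem⟩ := exists_zpow_mem H hidx ⟨0,1,0⟩
    rw [pow_K] at hmem
    exact ⟨m.toNat, by omega, ⟨m*0, m*1, 0⟩, hmem, rfl, by simp; omega⟩
  obtain ⟨b, hbpos, ⟨y0, hy0H, hy0c, hy0b⟩, hbmin⟩ := nat_min hbex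
  obtain ⟨ya, yb, yc⟩ := y0
  change yc = 0 at hy0c
  subst hy0c
  change yb = (b:ℤ) at hy0b
  subst hy0b
  have hbz : (0:ℤ) < (b:ℤ) := by exact_mod_cast hbpos
  have hbdvd : ∀ g ∈ H, g.c = 0 → (b:ℤ) ∣ g.b := by
    intro g hg hgc
    by_contra hnd
    set r := g.b % (b:ℤ) with hr
    have hr0 : 0 ≤ r := Int.emod_nonneg _ hbz.ne'
    have hr1 : r < b := Int.emod_lt_of_pos _ hbz
    have hrne : r ≠ 0 := fun h => hnd (Int.dvd_of_emod_eq_zero h)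
    have hmem : g * (⟨ya, (b:ℤ), 0⟩ : Gm) ^ (-(g.b / (b:ℤ))) ∈ H :=
      H.mul_mem hg (H.zpow_mem hy0H _)
    rw [pow_K] at hmem
    have hc : (g * (⟨-(g.b / (b:ℤ)) * ya, -(g.b / (b:ℤ)) * (b:ℤ), 0⟩ : Gm)).c = 0 := by
      simp [hgc]
    have hb2 : (g * (⟨-(g.b / (b:ℤ)) * ya, -(g.b / (b:ℤ)) * (b:ℤ), 0⟩ : Gm)).b = r := by
      have hd := Int.emod_def g.b (b:ℤ)
      simp only [b_mul, hgc, sg_zero, one_mul]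
      rw [hr, hd]; ring
    exact hbmin r.toNat (by omega) (by omega) ⟨_, hmem, hc, by rw [hb2]; omega⟩
  -- a : minimal positive first coordinate among c = b = 0 elements of H
  have haex : ∃ n : ℕ, 0 < n ∧ ∃ g ∈ H, g.c = 0 ∧ g.b = 0 ∧ g.a = (n:ℤ) := by
    obtain ⟨m, hm, hmem⟩ := exists_zpow_mem H hidx ⟨1,0,0⟩
    rw [pow_K] at hmem
    exact ⟨m.toNat, by omega, ⟨m*1, m*0, 0⟩, hmem, rfl, by simp, by simp; omega⟩
  obtain ⟨a, hapos, ⟨x0, hx0H, hx0c, hx0b, hx0a⟩, hamin⟩ := nat_min haex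
  obtain ⟨xa, xb, xc⟩ := x0
  change xc = 0 at hx0c
  subst hx0c
  change xb = 0 at hx0b
  subst hx0b
  change xa = (a:ℤ) at hx0a
  subst hx0a
  have haz : (0:ℤ) < (a:ℤ) := by exact_mod_cast hapos
  have hadvd : ∀ g ∈ H, g.c = 0 → g.b = 0 → (a:ℤ) ∣ g.a := by
    intro g hg hgc hgb
    by_contra hnd
    set r := g.a % (a:ℤ) with hr
    have hr0 : 0 ≤ r := Int.emod_nonneg _ haz.ne'
    have hr1 : r < a := Int.emod_lt_of_pos _ haz
    have hrne : r ≠ 0 := fun h => hnd (Int.dvd_of_emod_eq_zero h)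
    have hmem : g * (⟨(a:ℤ),0,0⟩ : Gm) ^ (-(g.a / (a:ℤ))) ∈ H :=
      H.mul_mem hg (H.zpow_mem hx0H _)
    rw [pow_K] at hmem
    have hc : (g * (⟨-(g.a / (a:ℤ)) * (a:ℤ), -(g.a / (a:ℤ)) * 0, 0⟩ : Gm)).c = 0 := by
      simp [hgc]
    have hb2 : (g * (⟨-(g.a / (a:ℤ)) * (a:ℤ), -(g.a / (a:ℤ)) * 0, 0⟩ : Gm)).b = 0 := by
      simp [hgc, hgb]
    have ha2 : (g * (⟨-(g.a / (a:ℤ)) * (a:ℤ), -(g.a / (a:ℤ)) * 0, 0⟩ : Gm)).a = r := by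
      have hd := Int.emod_def g.a (a:ℤ)
      simp only [a_mul, hgc, sg_zero, one_mul]
      rw [hr, hd]; ring
    exact hamin r.toNat (by omega) (by omega) ⟨_, hmem, hc, hb2, by rw [ha2]; omega⟩
  -- normalize the Y generator
  set s : ℤ := ya % (a:ℤ) with hs
  have hs0 : 0 ≤ s := Int.emod_nonneg _ haz.ne'
  have hs1 : s < a := Int.emod_lt_of_pos _ haz
  have hy1H : (⟨s, (b:ℤ), 0⟩ : Gm) ∈ H := by
    have hmem : (⟨(a:ℤ),0,0⟩ : Gm) ^ (-(ya / (a:ℤ))) * ⟨ya, (b:ℤ), 0⟩ ∈ H :=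
      H.mul_mem (H.zpow_mem hx0H _) hy0H
    rw [pow_K] at hmem
    have he : ((⟨-(ya / (a:ℤ)) * (a:ℤ), -(ya / (a:ℤ)) * 0, 0⟩ : Gm) *
        ⟨ya, (b:ℤ), 0⟩) = (⟨s, (b:ℤ), 0⟩ : Gm) := by
      have hd := Int.emod_def ya (a:ℤ)
      ext <;> simp [hs] <;> rw [hd] <;> ring
    rwa [he] at hmem
  -- normalize the W generator
  set u : ℤ := wb % (b:ℤ) with hu
  have hu0 : 0 ≤ u := Int.emod_nonneg _ hbz.ne'
  have hu1 : u < b := Int.emod_lt_of_pos _ hbz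
  set t : ℤ := (-(wb / (b:ℤ)) * s + wa) % (a:ℤ) with ht
  have ht0 : 0 ≤ t := Int.emod_nonneg _ haz.ne'
  have ht1 : t < a := Int.emod_lt_of_pos _ haz
  have hw2H : (⟨t, u, (γ:ℤ)⟩ : Gm) ∈ H := by
    have hmem : (⟨(a:ℤ),0,0⟩ : Gm) ^ (-((-(wb / (b:ℤ)) * s + wa) / (a:ℤ))) *
        ((⟨s, (b:ℤ), 0⟩ : Gm) ^ (-(wb / (b:ℤ))) * ⟨wa, wb, (γ:ℤ)⟩) ∈ H :=
      H.mul_mem (H.zpow_mem hx0H _) (H.mul_mem (H.zpow_mem hy1H _) hw0H)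
    rw [pow_K, pow_K] at hmem
    have he : (⟨-((-(wb / (b:ℤ)) * s + wa) / (a:ℤ)) * (a:ℤ),
          -((-(wb / (b:ℤ)) * s + wa) / (a:ℤ)) * 0, 0⟩ : Gm) *
        ((⟨-(wb / (b:ℤ)) * s, -(wb / (b:ℤ)) * (b:ℤ), 0⟩ : Gm) *
          ⟨wa, wb, (γ:ℤ)⟩) = (⟨t, u, (γ:ℤ)⟩ : Gm) := by
      have hda := Int.emod_def (-(wb / (b:ℤ)) * s + wa) (a:ℤ)
      have hdb := Int.emod_def wb (b:ℤ)
      refine Gm.ext ?_ ?_ ?_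
      · show _ = t
        rw [ht, hda]
        simp
        ring
      · show _ = u
        rw [hu, hdb]
        simp
        ring
      · simp
    rwa [he] at hmem
  refine ⟨a, b, γ, s, t, u, hapos, hbpos, hγpos, hs0, hs1, ht0, ht1, hu0, hu1, ?_⟩
  ext g
  constructor
  · intro hg
    obtain ⟨k, hk⟩ := hdvd g hg
    have h1 : (⟨t, u, (γ:ℤ)⟩ : Gm) ^ (-k) * g ∈ H := H.mul_mem (H.zpow_mem hw2H _) hg
    have h1c : ((⟨t, u, (γ:ℤ)⟩ : Gm) ^ (-k) * g).c = 0 := by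
      simp only [c_mul, c_zpow, hk]; ring
    obtain ⟨y, hy⟩ := hbdvd _ h1 h1c
    have h2 : (⟨s, (b:ℤ), 0⟩ : Gm) ^ (-y) * ((⟨t, u, (γ:ℤ)⟩ : Gm) ^ (-k) * g) ∈ H :=
      H.mul_mem (H.zpow_mem hy1H _) h1
    rw [pow_K] at h2
    have h2c : ((⟨-y * s, -y * (b:ℤ), 0⟩ : Gm) *
        ((⟨t, u, (γ:ℤ)⟩ : Gm) ^ (-k) * g)).c = 0 := by
      simp only [c_mul, c_zpow, hk]; ring
    have h2b : ((⟨-y * s, -y * (b:ℤ), 0⟩ : Gm) *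
        ((⟨t, u, (γ:ℤ)⟩ : Gm) ^ (-k) * g)).b = 0 := by
      rw [show ((⟨-y * s, -y * (b:ℤ), 0⟩ : Gm) *
          ((⟨t, u, (γ:ℤ)⟩ : Gm) ^ (-k) * g)).b =
          -y * (b:ℤ) + sg 0 * ((⟨t, u, (γ:ℤ)⟩ : Gm) ^ (-k) * g).b from rfl,
        hy, sg_zero]
      ring
    obtain ⟨x, hx⟩ := hadvd _ h2 h2c h2b
    have h2eq : (⟨-y * s, -y * (b:ℤ), 0⟩ : Gm) *
        ((⟨t, u, (γ:ℤ)⟩ : Gm) ^ (-k) * g) = ⟨(a:ℤ) * x, 0, 0⟩ :=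
      Gm.ext hx h2b h2c
    refine ⟨k, x, y, ?_⟩
    have hrec : (⟨(a:ℤ)*x + s*y, (b:ℤ)*y, 0⟩ : Gm) =
        (⟨s, (b:ℤ), 0⟩ : Gm) ^ y * ⟨(a:ℤ) * x, 0, 0⟩ := by
      rw [pow_K]; ext <;> simp <;> ring
    have h3 : (⟨s, (b:ℤ), 0⟩ : Gm) ^ (-y) * ((⟨t, u, (γ:ℤ)⟩ : Gm) ^ (-k) * g) =
        ⟨(a:ℤ) * x, 0, 0⟩ := by
      rw [pow_K]
      exact h2eq
    have h4 : g = (⟨t, u, (γ:ℤ)⟩ : Gm) ^ k *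
        ((⟨s, (b:ℤ), 0⟩ : Gm) ^ y * ((⟨s, (b:ℤ), 0⟩ : Gm) ^ (-y) *
          ((⟨t, u, (γ:ℤ)⟩ : Gm) ^ (-k) * g))) := by group
    rw [hrec, h4, h3]
  · rintro ⟨k, x, y, rfl⟩
    refine H.mul_mem (H.zpow_mem hw2H k) ?_
    have hrec : (⟨(a:ℤ)*x + s*y, (b:ℤ)*y, 0⟩ : Gm) =
        (⟨(a:ℤ), 0, 0⟩ : Gm) ^ x * (⟨s, (b:ℤ), 0⟩ : Gm) ^ y := by
      rw [pow_K, pow_K]; ext <;> simp <;> ring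
    rw [hrec]
    exact H.mul_mem (H.zpow_mem hx0H x) (H.zpow_mem hy1H y)

end Gm

namespace Gm

lemma not_iso_of_even {H : Subgroup Gm} (hev : ∀ g ∈ H, Even g.c)
    (e : H ≃* Gm) : False := by
  have hcomm : ∀ g1 g2 : H, g1 * g2 = g2 * g1 := by
    intro g1 g2
    have h1 := hev g1.1 g1.2
    have h2 := hev g2.1 g2.2
    apply Subtype.ext
    show (g1 : Gm) * g2 = (g2 : Gm) * g1
    ext <;> simp [sg_eq_one h1, sg_eq_one h2] <;> ring
  have hXZ : (⟨1,0,0⟩ : Gm) * ⟨0,0,1⟩ = ⟨0,0,1⟩ * ⟨1,0,0⟩ := by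
    have := hcomm (e.symm ⟨1,0,0⟩) (e.symm ⟨0,0,1⟩)
    have h2 := congrArg e this
    simpa [map_mul] using h2
  have := congrArg Gm.a hXZ
  simp [sg] at this

lemma Hsub_eq_unique {a1 b1 γ1 a2 b2 γ2 : ℕ} {s1 t1 u1 s2 t2 u2 : ℤ}
    (ha1 : 0 < a1) (hb1 : 0 < b1) (hγ1 : 0 < γ1)
    (ha2 : 0 < a2) (hb2 : 0 < b2) (hγ2 : 0 < γ2)
    (hodd : ¬ Even (γ1:ℤ))
    (hs1 : 0 ≤ s1) (hs1' : s1 < a1) (ht1 : 0 ≤ t1) (ht1' : t1 < a1)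
    (hu1 : 0 ≤ u1) (hu1' : u1 < b1)
    (hs2 : 0 ≤ s2) (hs2' : s2 < a2) (ht2 : 0 ≤ t2) (ht2' : t2 < a2)
    (hu2 : 0 ≤ u2) (hu2' : u2 < b2)
    (heq : Hsub (a1:ℤ) (b1:ℤ) s1 t1 u1 (γ1:ℤ) = Hsub (a2:ℤ) (b2:ℤ) s2 t2 u2 (γ2:ℤ)) :
    a1 = a2 ∧ b1 = b2 ∧ γ1 = γ2 ∧ s1 = s2 ∧ t1 = t2 ∧ u1 = u2 := by
  have hγz1 : (0:ℤ) < γ1 := by exact_mod_cast hγ1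
  have hγz2 : (0:ℤ) < γ2 := by exact_mod_cast hγ2
  have haz1 : (0:ℤ) < a1 := by exact_mod_cast ha1
  have haz2 : (0:ℤ) < a2 := by exact_mod_cast ha2
  have hbz1 : (0:ℤ) < b1 := by exact_mod_cast hb1
  have hbz2 : (0:ℤ) < b2 := by exact_mod_cast hb2
  -- γ
  have hγd1 : (γ1:ℤ) ∣ γ2 := by
    have := W_mem_Hsub (a2:ℤ) b2 s2 t2 u2 γ2
    rw [← heq] at this
    simpa using Hsub_c_dvd this
  have hγd2 : (γ2:ℤ) ∣ γ1 := by
    have := W_mem_Hsub (a1:ℤ) b1 s1 t1 u1 γ1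
    rw [heq] at this
    simpa using Hsub_c_dvd this
  have hγeq : γ1 = γ2 := by
    have := Int.dvd_antisymm (by positivity) (by positivity) hγd1 hγd2
    exact_mod_cast this
  -- b
  have hbd1 : (b1:ℤ) ∣ b2 := by
    have hm := Y_mem_Hsub (a2:ℤ) b2 s2 t2 u2 γ2
    rw [← heq] at hm
    obtain ⟨x, y, _, hy⟩ := (Hsub_mem_K hγz1.ne').mp hm
    exact ⟨y, hy⟩
  have hbd2 : (b2:ℤ) ∣ b1 := by
    have hm := Y_mem_Hsub (a1:ℤ) b1 s1 t1 u1 γ1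
    rw [heq] at hm
    obtain ⟨x, y, _, hy⟩ := (Hsub_mem_K hγz2.ne').mp hm
    exact ⟨y, hy⟩
  have hbeq : b1 = b2 := by
    have := Int.dvd_antisymm (by positivity) (by positivity) hbd1 hbd2
    exact_mod_cast this
  -- a
  have had1 : (a1:ℤ) ∣ a2 := by
    have hm := X_mem_Hsub (a2:ℤ) b2 s2 t2 u2 γ2
    rw [← heq] at hm
    obtain ⟨x, y, hx, hy⟩ := (Hsub_mem_K hγz1.ne').mp hm
    have hy0 : y = 0 := by
      rcases mul_eq_zero.mp hy.symm with h | h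
      · exact absurd h hbz1.ne'
      · exact h
    rw [hy0, mul_zero, add_zero] at hx
    exact ⟨x, hx⟩
  have had2 : (a2:ℤ) ∣ a1 := by
    have hm := X_mem_Hsub (a1:ℤ) b1 s1 t1 u1 γ1
    rw [heq] at hm
    obtain ⟨x, y, hx, hy⟩ := (Hsub_mem_K hγz2.ne').mp hm
    have hy0 : y = 0 := by
      rcases mul_eq_zero.mp hy.symm with h | h
      · exact absurd h hbz2.ne'
      · exact h
    rw [hy0, mul_zero, add_zero] at hx
    exact ⟨x, hx⟩
  have haeq : a1 = a2 := by
    have := Int.dvd_antisymm (by positivity) (by positivity) had1 had2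
    exact_mod_cast this
  subst haeq; subst hbeq; subst hγeq
  -- s
  have hseq : s1 = s2 := by
    have hm := Y_mem_Hsub (a1:ℤ) b1 s2 t2 u2 γ1
    rw [← heq] at hm
    obtain ⟨x, y, hx, hy⟩ := (Hsub_mem_K hγz1.ne').mp hm
    have hy1 : y = 1 := by
      have : (b1:ℤ) * 1 = b1 * y := by rw [mul_one]; exact hy
      exact (mul_left_cancel₀ hbz1.ne' this).symm
    rw [hy1, mul_one] at hx
    have hxx : s2 - s1 = (a1:ℤ) * x := by linarith
    have hd : s2 - s1 = 0 := dvd_small_eq_zero ⟨x, hxx⟩ (by omega) (by omega)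
    omega
  subst hseq
  -- t, u
  have hm := W_mem_Hsub (a1:ℤ) b1 s1 t2 u2 γ1
  rw [← heq] at hm
  obtain ⟨k, x, y, hk⟩ := hm
  have hc := congrArg Gm.c hk
  simp only [c_mul, c_zpow] at hc
  have hk1 : k = 1 := by
    have h1 : (γ1:ℤ) * 1 = γ1 * k := by
      have : (γ1:ℤ) = k * γ1 + 0 := by simpa using hc
      linarith [this]
    exact (mul_left_cancel₀ hγz1.ne' h1).symm
  subst hk1
  rw [zpow_one] at hk
  have ha' := congrArg Gm.a hk
  have hb' := congrArg Gm.b hk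
  simp only [a_mul, b_mul] at ha' hb'
  have hsgγ : sg (γ1:ℤ) = -1 := sg_eq_negone hodd
  rw [hsgγ] at ha' hb'
  -- ha' : t2 = t1 + -1 * (a1*x + s1*y), hb' : u2 = u1 + -1 * (b1*y)
  have hyy : u2 - u1 = (b1:ℤ) * (-y) := by linarith
  have huq : u2 - u1 = 0 := dvd_small_eq_zero ⟨-y, hyy⟩ (by omega) (by omega)
  have hy0 : y = 0 := by
    have : (b1:ℤ) * y = 0 := by linarith
    rcases mul_eq_zero.mp this with h | h
    · exact absurd h hbz1.ne'
    · exact h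
  rw [hy0] at ha'
  have hxx : t2 - t1 = (a1:ℤ) * (-x) := by linarith
  have htq : t2 - t1 = 0 := dvd_small_eq_zero ⟨-x, hxx⟩ (by omega) (by omega)
  exact ⟨rfl, rfl, rfl, rfl, by omega, by omega⟩

end Gm

namespace Gm

open Finset in
/-- admissible triples `(a,b,γ)` -/
def DTrip (n : ℕ) : Finset (ℕ × ℕ × ℕ) :=
  (Finset.range (n+1) ×ˢ Finset.range (n+1) ×ˢ Finset.range (n+1)).filter
    (fun d => 0 < d.1 ∧ 0 < d.2.1 ∧ 0 < d.2.2 ∧ d.1 * d.2.1 * d.2.2 = n ∧ ¬ Even d.2.2)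

def masterFun (n : ℕ)
    (x : Σ d : {d : ℕ × ℕ × ℕ // d ∈ DTrip n}, Fin d.1.1 × Fin d.1.1 × Fin d.1.2.1) :
    {H : Subgroup Gm // H.index = n ∧ Nonempty (H ≃* Gm)} :=
  ⟨Hsub (x.1.1.1 : ℤ) (x.1.1.2.1 : ℤ) ((x.2.1 : ℕ) : ℤ) ((x.2.2.1 : ℕ) : ℤ)
      ((x.2.2.2 : ℕ) : ℤ) (x.1.1.2.2 : ℤ), by
    obtain ⟨⟨⟨a, b, γ⟩, hd⟩, ⟨i, j, l⟩⟩ := x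
    simp only [DTrip, Finset.mem_filter] at hd
    obtain ⟨-, ha, hb, hγ, habγ, hodd⟩ := hd
    have hoddz : ¬ Even (γ:ℤ) := by rwa [Int.even_coe_nat]
    exact ⟨by rw [Hsub_index ha hb hγ hoddz]; exact habγ, Hsub_iso ha hb hγ hoddz⟩⟩

lemma masterFun_bijective (n : ℕ) (hn : n ≠ 0) :
    Function.Bijective (masterFun n) := by
  constructor
  · rintro ⟨⟨⟨a1, b1, γ1⟩, hd1⟩, ⟨i1, j1, l1⟩⟩ ⟨⟨⟨a2, b2, γ2⟩, hd2⟩, ⟨i2, j2, l2⟩⟩ h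
    have hH := congrArg Subtype.val h
    simp only [masterFun] at hH
    have hd1' := hd1
    have hd2' := hd2
    simp only [DTrip, Finset.mem_filter] at hd1' hd2'
    obtain ⟨-, ha1, hb1, hγ1, hn1, ho1⟩ := hd1'
    obtain ⟨-, ha2, hb2, hγ2, hn2, ho2⟩ := hd2'
    have ho1z : ¬ Even (γ1:ℤ) := by rwa [Int.even_coe_nat]
    have hE := Hsub_eq_unique ha1 hb1 hγ1 ha2 hb2 hγ2 ho1z
      (by positivity) (by exact_mod_cast i1.2) (by positivity) (by exact_mod_cast j1.2)
      (by positivity) (by exact_mod_cast l1.2)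
      (by positivity) (by exact_mod_cast i2.2) (by positivity) (by exact_mod_cast j2.2)
      (by positivity) (by exact_mod_cast l2.2) hH
    obtain ⟨hA, hB, hΓ, hS, hT, hU⟩ := hE
    subst hA; subst hB; subst hΓ
    have hi : i1 = i2 := Fin.ext (by exact_mod_cast hS)
    have hj : j1 = j2 := Fin.ext (by exact_mod_cast hT)
    have hl : l1 = l2 := Fin.ext (by exact_mod_cast hU)
    subst hi; subst hj; subst hl
    rw [Subsingleton.elim hd1 hd2]
  · rintro ⟨H, hidx, hiso⟩
    have hidx0 : H.index ≠ 0 := by rw [hidx]; exact hn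
    obtain ⟨a, b, γ, s, t, u, ha, hb, hγ, hs0, hs1, ht0, ht1, hu0, hu1, hHeq⟩ :=
      classify H hidx0
    have hodd : ¬ Even (γ:ℤ) := by
      intro hev
      refine not_iso_of_even (H := H) ?_ hiso.some
      intro g hg
      rw [hHeq] at hg
      obtain ⟨k, hk⟩ := Hsub_c_dvd hg
      rw [hk]
      exact hev.mul_right k
    have hoddn : ¬ Even γ := by rwa [Int.even_coe_nat] at hodd
    have hint : a * b * γ = n := by
      rw [← hidx, hHeq, Hsub_index ha hb hγ hodd]
    have hmem : (a, b, γ) ∈ DTrip n := by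
      have hna : a ≤ n := Nat.le_of_dvd (Nat.pos_of_ne_zero hn) ⟨b * γ, by rw [← hint]; ring⟩
      have hnb : b ≤ n := Nat.le_of_dvd (Nat.pos_of_ne_zero hn) ⟨a * γ, by rw [← hint]; ring⟩
      have hnγ : γ ≤ n := Nat.le_of_dvd (Nat.pos_of_ne_zero hn) ⟨a * b, by rw [← hint]; ring⟩
      simp only [DTrip, Finset.mem_filter, Finset.mem_product, Finset.mem_range]
      exact ⟨⟨by omega, by omega, by omega⟩, ha, hb, hγ, hint, hoddn⟩
    refine ⟨⟨⟨(a, b, γ), hmem⟩, (⟨s.toNat, show s.toNat < a by omega⟩,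
      ⟨t.toNat, show t.toNat < a by omega⟩, ⟨u.toNat, show u.toNat < b by omega⟩)⟩, ?_⟩
    apply Subtype.ext
    show Hsub (a:ℤ) (b:ℤ) ((s.toNat : ℕ) : ℤ) ((t.toNat : ℕ) : ℤ) ((u.toNat : ℕ) : ℤ) (γ:ℤ) = H
    have cs : ((s.toNat : ℕ) : ℤ) = s := by omega
    have ct : ((t.toNat : ℕ) : ℤ) = t := by omega
    have cu : ((u.toNat : ℕ) : ℤ) = u := by omega
    rw [cs, ct, cu, ← hHeq]

lemma count_Gm (n : ℕ) (hn : n ≠ 0) :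
    Nat.card {H : Subgroup Gm // H.index = n ∧ Nonempty (H ≃* Gm)} =
      ∑ d ∈ DTrip n, d.1 * d.1 * d.2.1 := by
  rw [← Nat.card_congr (Equiv.ofBijective _ (masterFun_bijective n hn))]
  rw [Nat.card_eq_fintype_card, Fintype.card_sigma]
  simp only [Fintype.card_prod, Fintype.card_fin]
  rw [← Finset.sum_coe_sort (DTrip n) (fun d => d.1 * d.1 * d.2.1)]
  exact Fintype.sum_congr _ _ (fun x => by ring)

end Gm

section Transfer

/-- the isomorphism `G2 ≃* Gm` -/
noncomputable def e0 : G2 ≃* Gm := G2iso.equivG2Gm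

lemma ker_e0 : (e0.toMonoidHom).ker = ⊥ :=
  e0.toMonoidHom.ker_eq_bot_iff.mpr e0.injective

lemma ker_e0' : (e0.symm.toMonoidHom).ker = ⊥ :=
  e0.symm.toMonoidHom.ker_eq_bot_iff.mpr e0.symm.injective

lemma map_map_id (K : Subgroup G2) :
    (K.map e0.toMonoidHom).map e0.symm.toMonoidHom = K := by
  rw [Subgroup.map_map]
  have h : e0.symm.toMonoidHom.comp e0.toMonoidHom = MonoidHom.id G2 := by
    refine MonoidHom.ext (fun x => ?_)
    show e0.symm (e0 x) = x
    exact e0.symm_apply_apply x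
  rw [h, Subgroup.map_id]

lemma map_map_id' (K : Subgroup Gm) :
    (K.map e0.symm.toMonoidHom).map e0.toMonoidHom = K := by
  rw [Subgroup.map_map]
  have h : e0.toMonoidHom.comp e0.symm.toMonoidHom = MonoidHom.id Gm := by
    refine MonoidHom.ext (fun x => ?_)
    show e0 (e0.symm x) = x
    exact e0.apply_symm_apply x
  rw [h, Subgroup.map_id]

noncomputable def transferEquiv (n : ℕ) :
    {H : Subgroup G2 // H.index = n ∧ Nonempty (H ≃* G2)} ≃
      {H : Subgroup Gm // H.index = n ∧ Nonempty (H ≃* Gm)} where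
  toFun x := ⟨x.1.map e0.toMonoidHom, by
    obtain ⟨H, h1, h2⟩ := x
    refine ⟨?_, ?_⟩
    · show (H.map e0.toMonoidHom).index = n
      rw [Subgroup.index_map_eq (H := H) (f := e0.toMonoidHom) e0.surjective (ker_e0 ▸ bot_le)]
      exact h1
    · obtain ⟨f⟩ := h2
      exact ⟨((e0.subgroupMap H).symm.trans f).trans e0⟩⟩
  invFun x := ⟨x.1.map e0.symm.toMonoidHom, by
    obtain ⟨H, h1, h2⟩ := x
    refine ⟨?_, ?_⟩
    · show (H.map e0.symm.toMonoidHom).index = n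
      rw [Subgroup.index_map_eq (H := H) (f := e0.symm.toMonoidHom) e0.symm.surjective (ker_e0' ▸ bot_le)]
      exact h1
    · obtain ⟨f⟩ := h2
      exact ⟨((e0.symm.subgroupMap H).symm.trans f).trans e0.symm⟩⟩
  left_inv x := Subtype.ext (map_map_id x.1)
  right_inv x := Subtype.ext (map_map_id' x.1)

end Transfer

/-- `omegaFn n = ∑_{a*b*c = n} a² * b`, summing over ordered triples of positive integers. -/
def omegaFn (n : ℕ) : ℕ :=
  ∑ t ∈ (Finset.range (n+1) ×ˢ Finset.range (n+1) ×ˢ Finset.range (n+1)).filter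
      (fun t => 0 < t.1 ∧ 0 < t.2.1 ∧ 0 < t.2.2 ∧ t.1 * t.2.1 * t.2.2 = n),
    t.1 ^ 2 * t.2.1

lemma omega_split (n : ℕ) (hn : 0 < n) :
    omegaFn n = (∑ d ∈ Gm.DTrip n, d.1 * d.1 * d.2.1) +
      (if 2 ∣ n then omegaFn (n / 2) else 0) := by
  classical
  set F := (Finset.range (n+1) ×ˢ Finset.range (n+1) ×ˢ Finset.range (n+1)).filter
      (fun t : ℕ × ℕ × ℕ => 0 < t.1 ∧ 0 < t.2.1 ∧ 0 < t.2.2 ∧ t.1 * t.2.1 * t.2.2 = n) with hF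
  have hsplit := Finset.sum_filter_add_sum_filter_not F (fun t => Even t.2.2)
    (fun t => t.1 ^ 2 * t.2.1)
  have hD : F.filter (fun t => ¬ Even t.2.2) = Gm.DTrip n := by
    ext t
    simp only [hF, Gm.DTrip, Finset.mem_filter, and_assoc]
  have hodd_sum : ∑ t ∈ F.filter (fun t => ¬ Even t.2.2), t.1 ^ 2 * t.2.1 =
      ∑ d ∈ Gm.DTrip n, d.1 * d.1 * d.2.1 := by
    rw [hD]
    exact Finset.sum_congr rfl (fun d _ => by ring)
  have heven_sum : ∑ t ∈ F.filter (fun t => Even t.2.2), t.1 ^ 2 * t.2.1 =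
      if 2 ∣ n then omegaFn (n / 2) else 0 := by
    by_cases h2 : 2 ∣ n
    · simp only [h2, if_true]
      unfold omegaFn
      refine Finset.sum_bij' (fun t _ => (t.1, t.2.1, t.2.2 / 2))
        (fun t _ => (t.1, t.2.1, 2 * t.2.2)) ?_ ?_ ?_ ?_ ?_
      · rintro ⟨a, b, γ⟩ ht
        simp only [hF, Finset.mem_filter, Finset.mem_product, Finset.mem_range,
          and_assoc] at ht ⊢
        obtain ⟨hb1, hb2, hb3, ha, hb, hγ, hprod, hev⟩ := ht
        obtain ⟨m, hm⟩ := hev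
        have hγ2 : γ = 2 * m := by
          have : γ = m + m := hm
          omega
        have hK : a * b * m * 2 = n := by rw [← hprod, hγ2]; ring
        set K := a * b * m with hKdef
        have hm0 : 0 < m := by omega
        have hK0 : 0 < K := by positivity
        have hd2 : γ / 2 = m := by omega
        have hbound : a ≤ K ∧ b ≤ K ∧ m ≤ K :=
          ⟨Nat.le_of_dvd hK0 ⟨b * m, by rw [hKdef]; ring⟩,
            Nat.le_of_dvd hK0 ⟨a * m, by rw [hKdef]; ring⟩,
            Nat.le_of_dvd hK0 ⟨a * b, by rw [hKdef]; ring⟩⟩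
        rw [hd2]
        exact ⟨by omega, by omega, by omega, ha, hb, hm0, by omega⟩
      · rintro ⟨a, b, γ⟩ ht
        simp only [Finset.mem_filter, Finset.mem_product, Finset.mem_range,
          and_assoc] at ht
        simp only [hF, Finset.mem_filter, Finset.mem_product, Finset.mem_range, and_assoc]
        obtain ⟨hb1, hb2, hb3, ha, hb, hγ, hprod⟩ := ht
        have hK : a * b * γ * 2 = n := by omega
        set K := a * b * γ with hKdef
        have hK0 : 0 < K := by positivity
        have hbound : a ≤ K ∧ b ≤ K ∧ γ ≤ K :=
          ⟨Nat.le_of_dvd hK0 ⟨b * γ, by rw [hKdef]; ring⟩,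
            Nat.le_of_dvd hK0 ⟨a * γ, by rw [hKdef]; ring⟩,
            Nat.le_of_dvd hK0 ⟨a * b, by rw [hKdef]; ring⟩⟩
        have hpr2 : a * b * (2 * γ) = n := by
          rw [show a*b*(2*γ) = a*b*γ*2 by ring]
          omega
        exact ⟨by omega, by omega, by omega, ha, hb, by omega, hpr2, γ, by ring⟩
      · rintro ⟨a, b, γ⟩ ht
        simp only [hF, Finset.mem_filter, Finset.mem_product, Finset.mem_range,
          and_assoc] at ht
        obtain ⟨-, -, -, -, -, -, -, hev⟩ := ht
        obtain ⟨m, hm⟩ := hev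
        have hγeq : γ = m + m := hm
        show (a, b, 2 * (γ / 2)) = (a, b, γ)
        have hh : 2 * (γ / 2) = γ := by omega
        rw [hh]
      · rintro ⟨a, b, γ⟩ ht
        show (a, b, 2 * γ / 2) = (a, b, γ)
        have hh : 2 * γ / 2 = γ := by omega
        rw [hh]
      · rintro ⟨a, b, γ⟩ ht
        rfl
    · simp only [h2, if_false]
      have hempty : F.filter (fun t => Even t.2.2) = ∅ := by
        refine Finset.filter_eq_empty_iff.mpr ?_
        rintro ⟨a, b, γ⟩ ht hev
        simp only [hF, Finset.mem_filter, and_assoc] at ht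
        obtain ⟨-, -, -, -, hprod⟩ := ht
        obtain ⟨m, hm⟩ := hev
        have hγeq : γ = m + m := hm
        exact h2 ⟨a * b * m, by rw [← hprod, hγeq]; ring⟩
      rw [hempty, Finset.sum_empty]
  have homega : omegaFn n = ∑ t ∈ F, t.1 ^ 2 * t.2.1 := rfl
  omega

theorem stmt19 (n : ℕ) (hn : 0 < n) :
    (Nat.card {H : Subgroup G2 // H.index = n ∧ Nonempty (H ≃* G2)} : ℤ) =
      (omegaFn n : ℤ) - (if 2 ∣ n then (omegaFn (n / 2) : ℤ) else 0) := by
  have h1 : Nat.card {H : Subgroup G2 // H.index = n ∧ Nonempty (H ≃* G2)} =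
      Nat.card {H : Subgroup Gm // H.index = n ∧ Nonempty (H ≃* Gm)} :=
    Nat.card_congr (transferEquiv n)
  rw [h1, Gm.count_Gm n hn.ne']
  have h2 := omega_split n hn
  by_cases hd : 2 ∣ n
  · simp only [hd, if_true] at h2 ⊢
    rw [h2]
    push_cast
    ring
  · simp only [hd, if_false] at h2 ⊢
    rw [h2]
    push_cast
    ring
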